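/- arXiv:2406.18596 — 4 statements merged into one kernel-verified Lean document; each statement's English description precedes it below -/
import Mathlib

section
/- Let a, b > 0 and let y : ℕ → ℝ with y(n) > 0 for all n, satisfying the difference inequality y(n+1) - y(n) ≤ b - a·y(n+1) for all n ≥ n₀. Then for all n ≥ n₀, y(n) ≤ (b/a)·(1 + (a·y(n₀)/b - 1)·(1+a)^{-(n - n₀)}). -/
theorem comparison_lemma_discrete_upper
    (a b : ℝ) (ha : 0 < a) (hb : 0 < b) (n₀ : ℕ)
    (y : ℕ → ℝ)
    (hpos : ∀ n, 0 < y n)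
    (hineq : ∀ n, n₀ ≤ n → y (n + 1) - y n ≤ b - a * y (n + 1)) :
    ∀ n, n₀ ≤ n →
      y n ≤ (b / a) * (1 + (a * y n₀ / b - 1) * (1 + a) ^ (-((n : ℤ) - (n₀ : ℤ)))) := by
  have ha1 : (0:ℝ) < 1 + a := by linarith
  have key : ∀ n, n₀ ≤ n →
      y n ≤ b / a + (y n₀ - b / a) * (1 + a) ^ (-((n : ℤ) - (n₀ : ℤ))) := by
    intro n hn
    induction n, hn using Nat.le_induction with
    | base => simp
    | succ n hn ih =>
      have h1 := hineq n hn
      have h2 : y (n + 1) ≤ (y n + b) / (1 + a) := by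
        rw [le_div_iff₀ ha1]; nlinarith
      have h3 : ((1 + a : ℝ)) ^ (-(((n + 1 : ℕ) : ℤ) - (n₀ : ℤ)))
          = (1 + a) ^ (-((n : ℤ) - (n₀ : ℤ))) / (1 + a) := by
        rw [div_eq_mul_inv, ← zpow_neg_one, ← zpow_add₀ (ne_of_gt ha1)]
        push_cast
        ring_nf
      rw [h3]
      have h4 : (b / a + (y n₀ - b / a) * (1 + a) ^ (-((n : ℤ) - (n₀ : ℤ))) + b) / (1 + a)
          = b / a + (y n₀ - b / a) * (1 + a) ^ (-((n : ℤ) - (n₀ : ℤ))) / (1 + a) := by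
        field_simp
        ring
      calc y (n + 1) ≤ (y n + b) / (1 + a) := h2
        _ ≤ (b / a + (y n₀ - b / a) * (1 + a) ^ (-((n : ℤ) - (n₀ : ℤ))) + b) / (1 + a) := by
            gcongr <;> linarith
        _ = _ := by rw [h4, mul_div_assoc]
  intro n hn
  have hk := key n hn
  have heq : (b / a) * (1 + (a * y n₀ / b - 1) * (1 + a) ^ (-((n : ℤ) - (n₀ : ℤ))))
      = b / a + (y n₀ - b / a) * (1 + a) ^ (-((n : ℤ) - (n₀ : ℤ))) := by
    field_simp
  linarith [heq ▸ hk]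
end

section
/- Let a, b > 0 and let y : ℕ → ℝ with y(n) > 0 for all n, satisfying y(n+1) - y(n) ≥ b - a·y(n+1) for all n ≥ n₀. Then for all n ≥ n₀, y(n) ≥ (b/a)·(1 + (a·y(n₀)/b - 1)·(1+a)^{-(n - n₀)}). -/
theorem comparison_lemma_discrete_lower
    (a b : ℝ) (ha : 0 < a) (hb : 0 < b) (n₀ : ℕ)
    (y : ℕ → ℝ)
    (hpos : ∀ n, 0 < y n)
    (hineq : ∀ n, n₀ ≤ n → y (n + 1) - y n ≥ b - a * y (n + 1)) :
    ∀ n, n₀ ≤ n →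
      y n ≥ (b / a) * (1 + (a * y n₀ / b - 1) * (1 + a) ^ (-((n : ℤ) - (n₀ : ℤ)))) := by
  have h1a : (0:ℝ) < 1 + a := by linarith
  have hz : (1+a:ℝ) ≠ 0 := ne_of_gt h1a
  have hkey : ∀ n, n₀ ≤ n →
      y n - b/a ≥ (y n₀ - b/a) * (1+a) ^ (-((n:ℤ) - (n₀:ℤ))) := by
    intro n hn
    induction n, hn using Nat.le_induction with
    | base => simp
    | succ m hm ih =>
      have h2 := hineq m hm
      have step : y (m+1) - b/a ≥ (y m - b/a) / (1+a) := by
        rw [ge_iff_le, div_le_iff₀ h1a]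
        have hba : b / a * a = b := div_mul_cancel₀ b (ne_of_gt ha)
        nlinarith [h2, hba]
      calc y (m+1) - b/a ≥ (y m - b/a)/(1+a) := step
        _ ≥ ((y n₀ - b/a) * (1+a) ^ (-((m:ℤ) - (n₀:ℤ)))) / (1+a) := by gcongr
        _ = (y n₀ - b/a) * (1+a) ^ (-(((m+1:ℕ):ℤ) - (n₀:ℤ))) := by
          rw [div_eq_mul_inv, mul_assoc, ← zpow_neg_one, ← zpow_add₀ hz]
          push_cast
          ring_nf
  intro n hn
  have hk := hkey n hn
  have hrw : (b/a) * (1 + (a * y n₀ / b - 1) * (1+a) ^ (-((n:ℤ) - (n₀:ℤ))))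
      = b/a + (y n₀ - b/a) * (1+a) ^ (-((n:ℤ) - (n₀:ℤ))) := by
    field_simp
  rw [hrw]
  linarith
end

section
/- Consider the continuous SICA system as above with positive parameters and 0 < λL ≤ λ(t) ≤ λU. Let (S, I, C, A) be a positive solution. Then liminf_{t→∞} S(t) ≥ Λ/(βλU + ν). -/
open Filter

theorem sica_S_liminf
    (Λ β ν ρ φ γ ω d lL lU : ℝ)
    (hΛ : 0 < Λ) (hβ : 0 < β) (hν : 0 < ν) (hρ : 0 < ρ) (hφ : 0 < φ)
    (hγ : 0 < γ) (hω : 0 < ω) (hd : 0 < d)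
    (S I C A lam : ℝ → ℝ)
    (hlam : ∀ t, 0 ≤ t → lL ≤ lam t ∧ lam t ≤ lU)
    (hlL : 0 < lL)
    (hS : ∀ t, 0 ≤ t → HasDerivAt S (Λ - β * lam t * S t - ν * S t) t)
    (hI : ∀ t, 0 ≤ t →
      HasDerivAt I (β * lam t * S t - (ρ + φ + ν) * I t + γ * A t + ω * C t) t)
    (hC : ∀ t, 0 ≤ t → HasDerivAt C (φ * I t - (ω + ν) * C t) t)
    (hA : ∀ t, 0 ≤ t → HasDerivAt A (ρ * I t - (γ + ν + d) * A t) t)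
    (hposS : ∀ t, 0 ≤ t → 0 < S t) (hposI : ∀ t, 0 ≤ t → 0 < I t)
    (hposC : ∀ t, 0 ≤ t → 0 < C t) (hposA : ∀ t, 0 ≤ t → 0 < A t) :
    liminf S atTop ≥ Λ / (β * lU + ν) := by
  have hlU : 0 < lU := hlL.trans_le ((hlam 0 le_rfl).1.trans (hlam 0 le_rfl).2)
  set k : ℝ := β * lU + ν with hkdef
  have hk0 : 0 < k := by positivity
  set L : ℝ := Λ / k with hLdef
  have hkL : k * L = Λ := mul_div_cancel₀ _ hk0.ne'
  clear_value k L
  set g : ℝ → ℝ := fun t => (S t - L) * Real.exp (k * t) with hgdef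
  have hg : ∀ t, 0 ≤ t → HasDerivAt g
      ((β * (lU - lam t) * S t) * Real.exp (k * t)) t := by
    intro t ht
    have hexp : HasDerivAt (fun t => Real.exp (k * t)) (k * Real.exp (k * t)) t := by
      simpa [mul_comm] using ((hasDerivAt_id t).const_mul k).exp
    have hprod := ((hS t ht).sub_const L).mul hexp
    convert hprod using 1
    · rfl
    · rfl
    · rfl
    have h1 : Λ - β * lam t * S t - ν * S t + k * (S t - L)
        = β * (lU - lam t) * S t := by
      rw [mul_sub, hkL, hkdef]; ring
    linear_combination (-Real.exp (k * t)) * h1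
  have hmono : MonotoneOn g (Set.Ici (0:ℝ)) := by
    apply monotoneOn_of_deriv_nonneg (convex_Ici 0)
    · intro x hx
      exact (hg x hx).differentiableAt.continuousAt.continuousWithinAt
    · intro x hx
      rw [interior_Ici] at hx
      exact (hg x hx.le).differentiableAt.differentiableWithinAt
    · intro x hx
      rw [interior_Ici] at hx
      rw [(hg x hx.le).deriv]
      exact mul_nonneg (mul_nonneg (mul_nonneg hβ.le
        (sub_nonneg.2 (hlam x hx.le).2)) (hposS x hx.le).le) (Real.exp_pos _).le
  -- lower bound function
  set u : ℝ → ℝ := fun t => L + (S 0 - L) * Real.exp (-(k * t)) with hudef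
  have hle : ∀ t, 0 ≤ t → u t ≤ S t := by
    intro t ht
    have h0 : g 0 ≤ g t := hmono (Set.self_mem_Ici) ht ht
    have hg0 : g 0 = S 0 - L := by simp [hgdef]
    have hgt : g t = (S t - L) * Real.exp (k * t) := rfl
    have hexp : (0:ℝ) < Real.exp (k * t) := Real.exp_pos _
    have h2 : (S 0 - L) * Real.exp (-(k * t)) ≤ S t - L := by
      rw [Real.exp_neg, ← div_eq_mul_inv, div_le_iff₀ hexp]
      rw [hg0, hgt] at h0
      exact h0
    simp only [hudef]
    linarith
  have hu_tendsto : Tendsto u atTop (nhds L) := by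
    have h1 : Tendsto (fun t : ℝ => -(k * t)) atTop atBot :=
      tendsto_neg_atBot_iff.mpr (Tendsto.const_mul_atTop hk0 tendsto_id)
    have h2 : Tendsto (fun t : ℝ => Real.exp (-(k * t))) atTop (nhds 0) :=
      Real.tendsto_exp_atBot.comp h1
    have h3 := (tendsto_const_nhds (x := L) (f := atTop)).add (h2.const_mul (S 0 - L))
    simpa using h3
  have hev : ∀ᶠ t in atTop, u t ≤ S t :=
    eventually_atTop.2 ⟨0, fun t ht => hle t ht⟩
  -- upper bound on S (for coboundedness)
  set m : ℝ := Λ / ν with hmdef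
  have hνm : ν * m = Λ := mul_div_cancel₀ _ hν.ne'
  clear_value m
  set h : ℝ → ℝ := fun t => (S t - m) * Real.exp (ν * t) with hhdef
  have hh : ∀ t, 0 ≤ t → HasDerivAt h
      ((-(β * lam t * S t)) * Real.exp (ν * t)) t := by
    intro t ht
    have hexp : HasDerivAt (fun t => Real.exp (ν * t)) (ν * Real.exp (ν * t)) t := by
      simpa [mul_comm] using ((hasDerivAt_id t).const_mul ν).exp
    have hprod := ((hS t ht).sub_const m).mul hexp
    convert hprod using 1
    · rfl
    · rfl
    · rfl
    have h1 : Λ - β * lam t * S t - ν * S t + ν * (S t - m)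
        = -(β * lam t * S t) := by
      rw [mul_sub, hνm]; ring
    linear_combination (-Real.exp (ν * t)) * h1
  have hanti : AntitoneOn h (Set.Ici (0:ℝ)) := by
    apply antitoneOn_of_deriv_nonpos (convex_Ici 0)
    · intro x hx
      exact (hh x hx).differentiableAt.continuousAt.continuousWithinAt
    · intro x hx
      rw [interior_Ici] at hx
      exact (hh x hx.le).differentiableAt.differentiableWithinAt
    · intro x hx
      rw [interior_Ici] at hx
      rw [(hh x hx.le).deriv]
      have hl : 0 ≤ lam x := hlL.le.trans (hlam x hx.le).1
      have hs := (hposS x hx.le).le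
      have : 0 ≤ β * lam x * S x := by positivity
      nlinarith [Real.exp_pos (ν * x)]
  have hSle : ∀ t, 0 ≤ t → S t ≤ max m (S 0) := by
    intro t ht
    have h0 : h t ≤ h 0 := hanti (Set.self_mem_Ici) ht ht
    have hh0 : h 0 = S 0 - m := by simp [hhdef]
    have hht : h t = (S t - m) * Real.exp (ν * t) := rfl
    rw [hh0, hht] at h0
    have he1 : (1:ℝ) ≤ Real.exp (ν * t) := Real.one_le_exp (by positivity)
    rcases le_or_gt (S t) m with hc | hc
    · exact hc.trans (le_max_left _ _)
    · have : S t - m ≤ S 0 - m := by nlinarith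
      have : S t ≤ S 0 := by linarith
      exact this.trans (le_max_right _ _)
  have hScobdd : IsCoboundedUnder (· ≥ ·) atTop S :=
    isCoboundedUnder_ge_of_eventually_le atTop
      (eventually_atTop.2 ⟨0, fun t ht => hSle t ht⟩)
  have hubdd : IsBoundedUnder (· ≥ ·) atTop u := hu_tendsto.isBoundedUnder_ge
  calc liminf S atTop ≥ liminf u atTop := liminf_le_liminf hev hubdd hScobdd
    _ = L := hu_tendsto.liminf_eq
end

section
/- Consider the continuous SICA system with positive parameters, 0 < λL ≤ λ(t) ≤ λU, and a positive solution (S, I, C, A). Suppose liminf_{t→∞} I(t) ≥ m₂ for some m₂ > 0. Then liminf_{t→∞} C(t) ≥ φ·m₂/(ω+ν) and liminf_{t→∞} A(t) ≥ ρ·m₂/(γ+ν+d). -/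
open Filter

/-- If `x' = v`, `x > 0` on `[0,∞)`, and eventually `L ≤ v + k·x`, then eventually
`c ≤ x` for any `c < L/k`. -/
lemma sica_key_eventually (k L c : ℝ) (hk : 0 < k) (x v : ℝ → ℝ)
    (hx : ∀ t, 0 ≤ t → HasDerivAt x (v t) t)
    (hxpos : ∀ t, 0 ≤ t → 0 < x t)
    (hv : ∀ᶠ t in atTop, L ≤ v t + k * x t)
    (hc : c < L / k) :
    ∀ᶠ t in atTop, c ≤ x t := by
  rcases le_or_gt c 0 with hc0 | hc0
  · filter_upwards [eventually_ge_atTop (0 : ℝ)] with t ht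
    exact hc0.trans (hxpos t ht).le
  -- now c > 0, hence L > 0
  have hLk : 0 < L / k := hc0.trans hc
  have hL : 0 < L := by
    have := mul_pos hLk hk
    rwa [div_mul_cancel₀ _ (ne_of_gt hk)] at this
  obtain ⟨T, hT⟩ := (hv.and (eventually_ge_atTop (0 : ℝ))).exists_forall_of_atTop
  have hT0 : (0 : ℝ) ≤ T := (hT T le_rfl).2
  set g : ℝ → ℝ := fun t => Real.exp (k * t) * (x t - L / k) with hg_def
  have hg : ∀ t, 0 ≤ t → HasDerivAt g (Real.exp (k * t) * (k * x t - L + v t)) t := by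
    intro t ht
    have h1 : HasDerivAt (fun s => Real.exp (k * s)) (Real.exp (k * t) * k) t := by
      simpa using (((hasDerivAt_id t).const_mul k).exp)
    have h2 := h1.mul ((hx t ht).sub_const (L / k))
    refine h2.congr_deriv ?_
    field_simp [hk.ne']
  have mono : MonotoneOn g (Set.Ici T) := by
    apply monotoneOn_of_deriv_nonneg (convex_Ici T)
    · intro t ht
      exact (hg t (hT0.trans ht)).continuousAt.continuousWithinAt
    · rw [interior_Ici]
      intro t ht
      exact (hg t (hT0.trans (le_of_lt ht))).differentiableAt.differentiableWithinAt
    · rw [interior_Ici]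
      intro t ht
      rw [(hg t (hT0.trans (le_of_lt ht))).deriv]
      have h3 := (hT t (le_of_lt ht)).1
      have := Real.exp_nonneg (k * t)
      nlinarith
  -- the tail estimate
  have hδ : 0 < (L - c * k) / L := by
    apply div_pos _ hL
    have : c * k < L / k * k := by
      exact mul_lt_mul_of_pos_right hc hk
    rw [div_mul_cancel₀ _ (ne_of_gt hk)] at this
    linarith
  have htend : Tendsto (fun t => Real.exp (k * (T - t))) atTop (nhds 0) := by
    apply Real.tendsto_exp_atBot.comp
    apply Tendsto.const_mul_atBot hk
    exact (tendsto_atBot_add_const_left atTop T tendsto_neg_atTop_atBot).congr fun t => (sub_eq_add_neg T t).symm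
  have hev : ∀ᶠ t in atTop, Real.exp (k * (T - t)) < (L - c * k) / L :=
    htend.eventually_lt_const hδ
  filter_upwards [eventually_ge_atTop T, hev] with t ht hlt
  have hmono := mono Set.self_mem_Ici ht ht
  have hxT := hxpos T hT0
  have hexpT : 0 < Real.exp (k * T) := Real.exp_pos _
  have hexpt : 0 < Real.exp (k * t) := Real.exp_pos _
  have hdiv : Real.exp (k * T) / Real.exp (k * t) = Real.exp (k * (T - t)) := by
    rw [← Real.exp_sub]; ring_nf
  -- g T ≥ -(L/k) * exp(kT)
  have h1 : -(L / k) * Real.exp (k * T) ≤ g T := by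
    simp only [hg_def]
    nlinarith
  have h2 : -(L / k) * Real.exp (k * T) ≤ Real.exp (k * t) * (x t - L / k) :=
    h1.trans hmono
  -- convert to x t ≥ (L/k) * (1 - exp(k(T-t)))
  have h3 : L / k * (1 - Real.exp (k * (T - t))) ≤ x t := by
    rw [← hdiv]
    rw [div_eq_iff (ne_of_gt hexpt)] at hdiv
    have := (div_le_iff₀ hexpt).mpr (by linarith : -(L / k) * Real.exp (k * T) ≤ (x t - L / k) * Real.exp (k * t))
    have h4 : -(L / k) * Real.exp (k * T) / Real.exp (k * t)
        = -(L / k) * (Real.exp (k * T) / Real.exp (k * t)) := by ring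
    rw [h4] at this
    nlinarith [Real.exp_pos (k * T), div_pos hexpT hexpt]
  have hkey : c ≤ L / k * (1 - (L - c * k) / L) := by
    have : L / k * (1 - (L - c * k) / L) = c := by
      field_simp
      ring
    linarith [this.ge]
  calc c ≤ L / k * (1 - (L - c * k) / L) := hkey
    _ ≤ L / k * (1 - Real.exp (k * (T - t))) := by
        apply mul_le_mul_of_nonneg_left _ hLk.le
        linarith
    _ ≤ x t := h3

/-- Liminf version. -/
lemma sica_key_liminf (k L : ℝ) (hk : 0 < k) (x v : ℝ → ℝ)
    (hx : ∀ t, 0 ≤ t → HasDerivAt x (v t) t)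
    (hxpos : ∀ t, 0 ≤ t → 0 < x t)
    (hbdd : ∃ B, ∀ᶠ t in atTop, x t ≤ B)
    (hv : ∀ c, c < L → ∀ᶠ t in atTop, c ≤ v t + k * x t) :
    L / k ≤ liminf x atTop := by
  obtain ⟨B, hB⟩ := hbdd
  refine le_of_forall_lt fun c hc => ?_
  obtain ⟨c₁, hc₁, hc₁'⟩ := exists_between hc
  obtain ⟨c₂, hc₂, hc₂'⟩ := exists_between hc₁'
  have hc₂L : c₂ * k < L := by
    have := mul_lt_mul_of_pos_right hc₂' hk
    rwa [div_mul_cancel₀ _ (ne_of_gt hk)] at this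
  have hev := sica_key_eventually k (c₂ * k) c₁ hk x v hx hxpos (hv _ hc₂L)
    (by rw [mul_div_cancel_right₀ _ (ne_of_gt hk)]; exact hc₂)
  have h1 : c₁ ≤ liminf x atTop :=
    le_liminf_of_le (isCoboundedUnder_ge_of_eventually_le atTop hB) hev
  exact lt_of_lt_of_le hc₁ h1

theorem sica_cascade_liminf
    (Λ β ν ρ φ γ ω d lL lU m₂ : ℝ)
    (hΛ : 0 < Λ) (hβ : 0 < β) (hν : 0 < ν) (hρ : 0 < ρ) (hφ : 0 < φ)
    (hγ : 0 < γ) (hω : 0 < ω) (hd : 0 < d) (hm₂ : 0 < m₂)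
    (S I C A lam : ℝ → ℝ)
    (hlam : ∀ t, 0 ≤ t → lL ≤ lam t ∧ lam t ≤ lU)
    (hlL : 0 < lL)
    (hS : ∀ t, 0 ≤ t → HasDerivAt S (Λ - β * lam t * S t - ν * S t) t)
    (hI : ∀ t, 0 ≤ t →
      HasDerivAt I (β * lam t * S t - (ρ + φ + ν) * I t + γ * A t + ω * C t) t)
    (hC : ∀ t, 0 ≤ t → HasDerivAt C (φ * I t - (ω + ν) * C t) t)
    (hA : ∀ t, 0 ≤ t → HasDerivAt A (ρ * I t - (γ + ν + d) * A t) t)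
    (hposS : ∀ t, 0 ≤ t → 0 < S t) (hposI : ∀ t, 0 ≤ t → 0 < I t)
    (hposC : ∀ t, 0 ≤ t → 0 < C t) (hposA : ∀ t, 0 ≤ t → 0 < A t)
    (hIlim : liminf I atTop ≥ m₂) :
    liminf C atTop ≥ φ * m₂ / (ω + ν) ∧
      liminf A atTop ≥ ρ * m₂ / (γ + ν + d) := by
  -- boundedness of the total population
  set N : ℝ → ℝ := fun t => S t + I t + C t + A t with hN_def
  have hN : ∀ t, 0 ≤ t → HasDerivAt N (Λ - ν * N t - d * A t) t := by
    intro t ht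
    have := (((hS t ht).add (hI t ht)).add (hC t ht)).add (hA t ht)
    refine this.congr_deriv ?_
    simp only [hN_def]
    ring
  set w : ℝ → ℝ := fun t => Real.exp (ν * t) * (N t - Λ / ν) with hw_def
  have hw : ∀ t, 0 ≤ t → HasDerivAt w (Real.exp (ν * t) * (-(d * A t))) t := by
    intro t ht
    have h1 : HasDerivAt (fun s => Real.exp (ν * s)) (Real.exp (ν * t) * ν) t := by
      simpa using (((hasDerivAt_id t).const_mul ν).exp)
    have h2 := h1.mul ((hN t ht).sub_const (Λ / ν))
    refine h2.congr_deriv ?_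
    field_simp [hν.ne']
    ring
  have anti : AntitoneOn w (Set.Ici (0 : ℝ)) := by
    apply antitoneOn_of_deriv_nonpos (convex_Ici 0)
    · intro t ht
      exact (hw t ht).continuousAt.continuousWithinAt
    · rw [interior_Ici]
      intro t ht
      exact (hw t (le_of_lt ht)).differentiableAt.differentiableWithinAt
    · rw [interior_Ici]
      intro t ht
      rw [(hw t (le_of_lt ht)).deriv]
      have h5 : 0 ≤ Real.exp (ν * t) * (d * A t) := by
        have := hposA t (le_of_lt ht)
        positivity
      nlinarith
  have hNbd : ∀ t, 0 ≤ t → N t ≤ Λ / ν + |N 0 - Λ / ν| := by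
    intro t ht
    have h1 := anti Set.self_mem_Ici ht ht
    have hw0 : w 0 = N 0 - Λ / ν := by simp [hw_def]
    have hexpt : (1 : ℝ) ≤ Real.exp (ν * t) := by
      apply Real.one_le_exp
      positivity
    have h2 : Real.exp (ν * t) * (N t - Λ / ν) ≤ |N 0 - Λ / ν| := by
      calc Real.exp (ν * t) * (N t - Λ / ν) = w t := rfl
        _ ≤ w 0 := h1
        _ = N 0 - Λ / ν := hw0
        _ ≤ |N 0 - Λ / ν| := le_abs_self _
    rcases le_or_gt (N t - Λ / ν) 0 with h | h
    · have : (0:ℝ) ≤ |N 0 - Λ / ν| := abs_nonneg _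
      linarith
    · nlinarith [abs_nonneg (N 0 - Λ / ν)]
  set B : ℝ := Λ / ν + |N 0 - Λ / ν| with hB_def
  have hCbd : ∀ᶠ t in atTop, C t ≤ B := by
    filter_upwards [eventually_ge_atTop (0:ℝ)] with t ht
    have := hNbd t ht
    have := hposS t ht; have := hposI t ht; have := hposA t ht
    simp only [hN_def] at *
    linarith
  have hAbd : ∀ᶠ t in atTop, A t ≤ B := by
    filter_upwards [eventually_ge_atTop (0:ℝ)] with t ht
    have := hNbd t ht
    have := hposS t ht; have := hposI t ht; have := hposC t ht
    simp only [hN_def] at *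
    linarith
  have hIbdd : IsBoundedUnder (· ≥ ·) atTop I :=
    ⟨0, by
      rw [eventually_map]
      filter_upwards [eventually_ge_atTop (0:ℝ)] with t ht
      exact (hposI t ht).le⟩
  -- eventual lower bounds on φ·I and ρ·I
  have hIev : ∀ c, c < m₂ → ∀ᶠ t in atTop, c ≤ I t := by
    intro c hcm
    have : c < liminf I atTop := lt_of_lt_of_le hcm hIlim
    filter_upwards [eventually_lt_of_lt_liminf this hIbdd] with t ht using ht.le
  constructor
  · apply sica_key_liminf (ω + ν) (φ * m₂) (by positivity) C
      (fun t => φ * I t - (ω + ν) * C t) hC hposC ⟨B, hCbd⟩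
    intro c hcL
    have hcm : c / φ < m₂ := by
      rw [div_lt_iff₀ hφ]
      linarith [hcL]
    filter_upwards [hIev _ hcm] with t ht
    have : c / φ * φ ≤ I t * φ := mul_le_mul_of_nonneg_right ht hφ.le
    rw [div_mul_cancel₀ _ (ne_of_gt hφ)] at this
    nlinarith
  · apply sica_key_liminf (γ + ν + d) (ρ * m₂) (by positivity) A
      (fun t => ρ * I t - (γ + ν + d) * A t) hA hposA ⟨B, hAbd⟩
    intro c hcL
    have hcm : c / ρ < m₂ := by
      rw [div_lt_iff₀ hρ]
      linarith [hcL]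
    filter_upwards [hIev _ hcm] with t ht
    have : c / ρ * ρ ≤ I t * ρ := mul_le_mul_of_nonneg_right ht hρ.le
    rw [div_mul_cancel₀ _ (ne_of_gt hρ)] at this
    nlinarith
end
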